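/- For all j ∈ ℤ and t ≥ 0, the time derivative of the discrete heat kernel satisfies |ġ_j(t)| ≤ -ġ_0(t), and there is a constant C with -ġ_0(t) ≤ C (1+t)^{-3/2}. -/

import Mathlib

open Real MeasureTheory intervalIntegral

/-- The discrete heat kernel on ℤ, via its Fourier representation. -/
noncomputable def heatKernel (j : ℤ) (t : ℝ) : ℝ :=
  (1 / (2 * Real.pi)) *
    ∫ k in (-Real.pi)..Real.pi, Real.exp (-(2 * (1 - Real.cos k)) * t) * Real.cos (j * k)

namespace HKaux

noncomputable def rho (k : ℝ) : ℝ := 2 * (1 - Real.cos k)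

lemma rho_nonneg (k : ℝ) : 0 ≤ rho k := by
  have := Real.cos_le_one k; unfold rho; linarith

lemma rho_le_four (k : ℝ) : rho k ≤ 4 := by
  have := Real.neg_one_le_cos k; unfold rho; linarith

lemma rho_cont : Continuous rho := by unfold rho; fun_prop

lemma neg_pi_le_pi : -Real.pi ≤ Real.pi := by linarith [Real.pi_pos]

lemma hasDerivAt_heatKernel (j : ℤ) (t : ℝ) :
    HasDerivAt (heatKernel j)
      ((1 / (2 * Real.pi)) *
        ∫ k in (-Real.pi)..Real.pi,
          (-(2 * (1 - Real.cos k)) * Real.exp (-(2 * (1 - Real.cos k)) * t)) *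
            Real.cos (j * k)) t := by
  set μ : Measure ℝ := volume.restrict (Set.Ioc (-Real.pi) Real.pi) with hμ
  have hrw : heatKernel j = fun x => (1 / (2 * Real.pi)) *
      ∫ k, Real.exp (-(2 * (1 - Real.cos k)) * x) * Real.cos (j * k) ∂μ := by
    funext x
    unfold heatKernel
    rw [intervalIntegral.integral_of_le neg_pi_le_pi]
  rw [hrw, intervalIntegral.integral_of_le neg_pi_le_pi]
  have key : HasDerivAt
      (fun x => ∫ k, Real.exp (-(2 * (1 - Real.cos k)) * x) * Real.cos (j * k) ∂μ)
      (∫ k, (-(2 * (1 - Real.cos k)) * Real.exp (-(2 * (1 - Real.cos k)) * t)) *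
        Real.cos (j * k) ∂μ) t := by
    have hμfin : IsFiniteMeasure μ := by
      rw [hμ]
      exact ⟨by rw [Measure.restrict_apply_univ, Real.volume_Ioc]; exact ENNReal.ofReal_lt_top⟩
    refine (_root_.hasDerivAt_integral_of_dominated_loc_of_deriv_le (hs := Metric.ball_mem_nhds t one_pos)
      (bound := fun _ => 4 * Real.exp (4 * (|t| + 1)))
      (F' := fun x k => (-(2 * (1 - Real.cos k)) * Real.exp (-(2 * (1 - Real.cos k)) * x)) *
        Real.cos (j * k))
      ?_ ?_ ?_ ?_ ?_ ?_).2
    · filter_upwards with x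
      exact (Continuous.aestronglyMeasurable (by fun_prop))
    · exact Continuous.integrableOn_Ioc (by fun_prop)
    · exact Continuous.aestronglyMeasurable (by fun_prop)
    · filter_upwards with k
      intro x hx
      have hx' : |x| ≤ |t| + 1 := by
        have := abs_sub_abs_le_abs_sub x t
        have h2 : |x - t| < 1 := by simpa [Metric.mem_ball, Real.dist_eq] using hx
        linarith
      have h0' : (0:ℝ) ≤ 2 * (1 - Real.cos k) := rho_nonneg k
      have h4' : 2 * (1 - Real.cos k) ≤ 4 := rho_le_four k
      have hexp : Real.exp (-(2 * (1 - Real.cos k)) * x) ≤ Real.exp (4 * (|t| + 1)) := by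
        apply Real.exp_le_exp.2
        have hmm := mul_le_mul_of_nonneg_left (neg_le_abs x) h0'
        have h2 : 2 * (1 - Real.cos k) * |x| ≤ 4 * (|t| + 1) :=
          mul_le_mul h4' hx' (abs_nonneg x) (by norm_num)
        nlinarith [hmm, h2]
      have hcos : |Real.cos ((j : ℝ) * k)| ≤ 1 := Real.abs_cos_le_one _
      rw [Real.norm_eq_abs, abs_mul, abs_mul, abs_neg, abs_of_nonneg h0', Real.abs_exp]
      calc 2 * (1 - Real.cos k) * Real.exp (-(2 * (1 - Real.cos k)) * x) * |Real.cos ((j:ℝ) * k)|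
          ≤ 2 * (1 - Real.cos k) * Real.exp (-(2 * (1 - Real.cos k)) * x) * 1 := by
            apply mul_le_mul_of_nonneg_left hcos
            positivity
        _ ≤ 4 * Real.exp (4 * (|t| + 1)) := by
            rw [mul_one]
            exact mul_le_mul h4' hexp (Real.exp_nonneg _) (by norm_num)
    · exact integrable_const _
    · filter_upwards with k
      intro x hx
      have h1 : HasDerivAt (fun y : ℝ => -(2 * (1 - Real.cos k)) * y)
          (-(2 * (1 - Real.cos k)) * 1) x := (hasDerivAt_id x).const_mul _
      have h2 := (h1.exp).mul_const (Real.cos ((j : ℝ) * k))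
      exact h2.congr_deriv (by ring)
  have := key.const_mul (1 / (2 * Real.pi))
  exact this

lemma deriv_heatKernel (j : ℤ) (t : ℝ) :
    deriv (heatKernel j) t = (1 / (2 * Real.pi)) *
      ∫ k in (-Real.pi)..Real.pi,
        (-(2 * (1 - Real.cos k)) * Real.exp (-(2 * (1 - Real.cos k)) * t)) *
          Real.cos (j * k) :=
  (hasDerivAt_heatKernel j t).deriv

lemma neg_deriv_zero (t : ℝ) :
    -deriv (heatKernel 0) t = (1 / (2 * Real.pi)) *
      ∫ k in (-Real.pi)..Real.pi,
        (2 * (1 - Real.cos k)) * Real.exp (-(2 * (1 - Real.cos k)) * t) := by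
  rw [deriv_heatKernel]
  rw [show (fun k => (-(2 * (1 - Real.cos k)) * Real.exp (-(2 * (1 - Real.cos k)) * t)) *
      Real.cos (((0:ℤ) : ℝ) * k)) = fun k =>
      -((2 * (1 - Real.cos k)) * Real.exp (-(2 * (1 - Real.cos k)) * t)) from ?_]
  · rw [intervalIntegral.integral_neg]; ring
  · funext k; simp

end HKaux

open HKaux in
theorem heatKernel_time_derivative_bounds :
    (∀ (j : ℤ) (t : ℝ), 0 ≤ t →
      |deriv (heatKernel j) t| ≤ -deriv (heatKernel 0) t) ∧
    (∃ C : ℝ, 0 < C ∧ ∀ t : ℝ, 0 ≤ t →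
      -deriv (heatKernel 0) t ≤ C * (1 + t) ^ (-(3 / 2) : ℝ)) := by
  have hπ := Real.pi_pos
  constructor
  · intro j t _
    rw [deriv_heatKernel, neg_deriv_zero, abs_mul,
      abs_of_pos (by positivity : (0:ℝ) < 1 / (2 * Real.pi))]
    apply mul_le_mul_of_nonneg_left _ (by positivity)
    calc |∫ k in (-Real.pi)..Real.pi,
          (-(2 * (1 - Real.cos k)) * Real.exp (-(2 * (1 - Real.cos k)) * t)) *
            Real.cos (j * k)|
        ≤ ∫ k in (-Real.pi)..Real.pi,
          |(-(2 * (1 - Real.cos k)) * Real.exp (-(2 * (1 - Real.cos k)) * t)) *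
            Real.cos (j * k)| :=
          intervalIntegral.abs_integral_le_integral_abs neg_pi_le_pi
      _ ≤ ∫ k in (-Real.pi)..Real.pi,
          (2 * (1 - Real.cos k)) * Real.exp (-(2 * (1 - Real.cos k)) * t) := by
          apply intervalIntegral.integral_mono_on neg_pi_le_pi
          · exact (Continuous.intervalIntegrable (by fun_prop) _ _)
          · exact (Continuous.intervalIntegrable (by fun_prop) _ _)
          · intro k _
            have h0 : 0 ≤ 2 * (1 - Real.cos k) := rho_nonneg k
            rw [abs_mul, abs_mul, abs_neg, abs_of_nonneg h0, Real.abs_exp]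
            calc 2 * (1 - Real.cos k) * Real.exp (-(2 * (1 - Real.cos k)) * t) *
                  |Real.cos ((j:ℝ) * k)|
                ≤ 2 * (1 - Real.cos k) * Real.exp (-(2 * (1 - Real.cos k)) * t) * 1 := by
                  apply mul_le_mul_of_nonneg_left (Real.abs_cos_le_one _) (by positivity)
              _ = _ := by ring
  · refine ⟨Real.exp 4 * Real.sqrt Real.pi * Real.pi ^ 2 / 32, by positivity, ?_⟩
    intro t ht
    set a : ℝ := 4 / Real.pi ^ 2 * (1 + t) with ha
    clear_value a
    have hapos : 0 < a := by rw [ha]; positivity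
    -- pointwise bound
    have hpt : ∀ k ∈ Set.Icc (-Real.pi) Real.pi,
        (2 * (1 - Real.cos k)) * Real.exp (-(2 * (1 - Real.cos k)) * t) ≤
          Real.exp 4 * (k ^ 2 * Real.exp (-a * k ^ 2)) := by
      intro k hk
      have hk' : |k| ≤ Real.pi := abs_le.2 ⟨hk.1, hk.2⟩
      have hub : 2 * (1 - Real.cos k) ≤ k ^ 2 := by
        have := Real.one_sub_sq_div_two_le_cos (x := k); linarith
      have hlb : 4 / Real.pi ^ 2 * k ^ 2 ≤ 2 * (1 - Real.cos k) := by
        have := Real.cos_le_one_sub_mul_cos_sq hk'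
        have h2 : 2 / Real.pi ^ 2 * k ^ 2 ≤ 1 - Real.cos k := by linarith
        calc 4 / Real.pi ^ 2 * k ^ 2 = 2 * (2 / Real.pi ^ 2 * k ^ 2) := by ring
          _ ≤ 2 * (1 - Real.cos k) := by linarith
      have h0 : 0 ≤ 2 * (1 - Real.cos k) := rho_nonneg k
      have h4 : 2 * (1 - Real.cos k) ≤ 4 := rho_le_four k
      have hsplit : Real.exp (-(2 * (1 - Real.cos k)) * t) =
          Real.exp (2 * (1 - Real.cos k)) * Real.exp (-(2 * (1 - Real.cos k)) * (1 + t)) := by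
        rw [← Real.exp_add]; ring_nf
      rw [hsplit]
      have hexp1 : Real.exp (2 * (1 - Real.cos k)) ≤ Real.exp 4 := Real.exp_le_exp.2 h4
      have hexp2 : Real.exp (-(2 * (1 - Real.cos k)) * (1 + t)) ≤ Real.exp (-a * k ^ 2) := by
        apply Real.exp_le_exp.2
        have : a * k ^ 2 ≤ 2 * (1 - Real.cos k) * (1 + t) := by
          rw [ha]
          calc 4 / Real.pi ^ 2 * (1 + t) * k ^ 2 = (4 / Real.pi ^ 2 * k ^ 2) * (1 + t) := by ring
            _ ≤ 2 * (1 - Real.cos k) * (1 + t) := by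
                apply mul_le_mul_of_nonneg_right hlb (by linarith)
        nlinarith
      calc 2 * (1 - Real.cos k) *
            (Real.exp (2 * (1 - Real.cos k)) * Real.exp (-(2 * (1 - Real.cos k)) * (1 + t)))
          ≤ k ^ 2 * (Real.exp 4 * Real.exp (-a * k ^ 2)) := by
            apply mul_le_mul hub _ (by positivity) (by positivity)
            exact mul_le_mul hexp1 hexp2 (Real.exp_nonneg _) (Real.exp_nonneg _)
        _ = Real.exp 4 * (k ^ 2 * Real.exp (-a * k ^ 2)) := by ring
    -- gaussian moment bound
    have hgauss : ∫ k in (-Real.pi)..Real.pi, k ^ 2 * Real.exp (-a * k ^ 2) ≤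
        1 / (2 * a) * Real.sqrt (Real.pi / a) := by
      have hderiv : ∀ k ∈ Set.uIcc (-Real.pi) Real.pi,
          HasDerivAt (fun k : ℝ => -k * Real.exp (-a * k ^ 2) / (2 * a))
            (k ^ 2 * Real.exp (-a * k ^ 2) - Real.exp (-a * k ^ 2) / (2 * a)) k := by
        intro k _
        have h1 : HasDerivAt (fun k : ℝ => k ^ 2) (2 * k) k := by
          simpa using hasDerivAt_pow 2 k
        have h2 : HasDerivAt (fun k : ℝ => -a * k ^ 2) (-a * (2 * k)) k := h1.const_mul _
        have h3 := h2.exp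
        have h4 := ((hasDerivAt_id k).mul h3).const_mul (-(1 / (2 * a)))
        have heq : (fun k : ℝ => -(1 / (2 * a)) * (id k * Real.exp (-a * k ^ 2))) =
            fun k : ℝ => -k * Real.exp (-a * k ^ 2) / (2 * a) := by
          funext x
          show -(1 / (2 * a)) * (x * Real.exp (-a * x ^ 2)) = -x * Real.exp (-a * x ^ 2) / (2 * a)
          ring
        change HasDerivAt (fun k : ℝ => -(1 / (2 * a)) * (id k * Real.exp (-a * k ^ 2))) _ k at h4
        rw [heq] at h4
        convert h4 using 1
        have hane : a ≠ 0 := ne_of_gt hapos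
        field_simp
        simp only [id]
        ring
      have hint1 : IntervalIntegrable
          (fun k : ℝ => k ^ 2 * Real.exp (-a * k ^ 2) - Real.exp (-a * k ^ 2) / (2 * a))
          volume (-Real.pi) Real.pi := Continuous.intervalIntegrable (by fun_prop) _ _
      have hftc := intervalIntegral.integral_eq_sub_of_hasDerivAt hderiv hint1
      have hsub : ∫ k in (-Real.pi)..Real.pi,
          (k ^ 2 * Real.exp (-a * k ^ 2) - Real.exp (-a * k ^ 2) / (2 * a)) =
          (∫ k in (-Real.pi)..Real.pi, k ^ 2 * Real.exp (-a * k ^ 2)) -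
          ∫ k in (-Real.pi)..Real.pi, Real.exp (-a * k ^ 2) / (2 * a) :=
        intervalIntegral.integral_sub (Continuous.intervalIntegrable (by fun_prop) _ _)
          (Continuous.intervalIntegrable (by fun_prop) _ _)
      rw [hsub] at hftc
      have hIe : ∫ k in (-Real.pi)..Real.pi, Real.exp (-a * k ^ 2) ≤
          Real.sqrt (Real.pi / a) := by
        rw [intervalIntegral.integral_of_le neg_pi_le_pi]
        have := MeasureTheory.setIntegral_le_integral (μ := volume)
          (s := Set.Ioc (-Real.pi) Real.pi)
          (f := fun k => Real.exp (-a * k ^ 2)) (integrable_exp_neg_mul_sq hapos)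
          (by filter_upwards with k; positivity)
        calc ∫ k in Set.Ioc (-Real.pi) Real.pi, Real.exp (-a * k ^ 2) ≤
              ∫ k : ℝ, Real.exp (-a * k ^ 2) := this
          _ = Real.sqrt (Real.pi / a) := integral_gaussian a
      have hIediv : ∫ k in (-Real.pi)..Real.pi, Real.exp (-a * k ^ 2) / (2 * a) =
          (∫ k in (-Real.pi)..Real.pi, Real.exp (-a * k ^ 2)) / (2 * a) :=
        intervalIntegral.integral_div _ _
      have h2a : (0:ℝ) < 2 * a := by linarith
      have hXpos : 0 ≤ Real.pi * Real.exp (-a * Real.pi ^ 2) / (2 * a) := by positivity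
      have hsq : (-Real.pi) ^ 2 = Real.pi ^ 2 := by ring
      rw [hsq] at hftc
      have hRHS : -Real.pi * Real.exp (-a * Real.pi ^ 2) / (2 * a) -
          - -Real.pi * Real.exp (-a * Real.pi ^ 2) / (2 * a) ≤ 0 := by
        have he : - -Real.pi * Real.exp (-a * Real.pi ^ 2) / (2 * a) =
            Real.pi * Real.exp (-a * Real.pi ^ 2) / (2 * a) := by ring
        rw [he]
        have h1 : -Real.pi * Real.exp (-a * Real.pi ^ 2) / (2 * a) ≤ 0 := by
          apply div_nonpos_of_nonpos_of_nonneg _ h2a.le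
          nlinarith [Real.exp_nonneg (-a * Real.pi ^ 2), hπ]
        linarith [hXpos]
      have hkey : (∫ k in (-Real.pi)..Real.pi, k ^ 2 * Real.exp (-a * k ^ 2)) ≤
          ∫ k in (-Real.pi)..Real.pi, Real.exp (-a * k ^ 2) / (2 * a) := by
        linarith [hftc.le, hftc.ge, hRHS]
      calc ∫ k in (-Real.pi)..Real.pi, k ^ 2 * Real.exp (-a * k ^ 2)
          ≤ ∫ k in (-Real.pi)..Real.pi, Real.exp (-a * k ^ 2) / (2 * a) := hkey
        _ = (∫ k in (-Real.pi)..Real.pi, Real.exp (-a * k ^ 2)) / (2 * a) := hIediv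
        _ ≤ Real.sqrt (Real.pi / a) / (2 * a) := by gcongr
        _ = 1 / (2 * a) * Real.sqrt (Real.pi / a) := by ring
    -- combine
    rw [neg_deriv_zero]
    have hmono : ∫ k in (-Real.pi)..Real.pi,
        (2 * (1 - Real.cos k)) * Real.exp (-(2 * (1 - Real.cos k)) * t) ≤
        ∫ k in (-Real.pi)..Real.pi, Real.exp 4 * (k ^ 2 * Real.exp (-a * k ^ 2)) := by
      apply intervalIntegral.integral_mono_on neg_pi_le_pi
        (Continuous.intervalIntegrable (by fun_prop) _ _)
        (Continuous.intervalIntegrable (by fun_prop) _ _) hpt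
    have hconst : ∫ k in (-Real.pi)..Real.pi, Real.exp 4 * (k ^ 2 * Real.exp (-a * k ^ 2)) =
        Real.exp 4 * ∫ k in (-Real.pi)..Real.pi, k ^ 2 * Real.exp (-a * k ^ 2) :=
      intervalIntegral.integral_const_mul _ _
    have hchain : (1 / (2 * Real.pi)) *
        ∫ k in (-Real.pi)..Real.pi,
          (2 * (1 - Real.cos k)) * Real.exp (-(2 * (1 - Real.cos k)) * t) ≤
        (1 / (2 * Real.pi)) * (Real.exp 4 * (1 / (2 * a) * Real.sqrt (Real.pi / a))) := by
      apply mul_le_mul_of_nonneg_left _ (by positivity)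
      calc _ ≤ ∫ k in (-Real.pi)..Real.pi, Real.exp 4 * (k ^ 2 * Real.exp (-a * k ^ 2)) := hmono
        _ = Real.exp 4 * ∫ k in (-Real.pi)..Real.pi, k ^ 2 * Real.exp (-a * k ^ 2) := hconst
        _ ≤ Real.exp 4 * (1 / (2 * a) * Real.sqrt (Real.pi / a)) := by
            apply mul_le_mul_of_nonneg_left hgauss (Real.exp_nonneg _)
    refine hchain.trans (le_of_eq ?_)
    -- arithmetic identity
    set s : ℝ := Real.sqrt (1 + t) with hs
    have hspos : 0 < s := Real.sqrt_pos.2 (by linarith)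
    have hs2 : s ^ 2 = 1 + t := Real.sq_sqrt (by linarith)
    have hsa : Real.sqrt a = 2 / Real.pi * s := by
      rw [show a = (2 / Real.pi * s) ^ 2 from by rw [ha, mul_pow, hs2]; ring]
      exact Real.sqrt_sq (by positivity)
    have hsdiv : Real.sqrt (Real.pi / a) = Real.sqrt Real.pi / (2 / Real.pi * s) := by
      rw [Real.sqrt_div Real.pi_pos.le, hsa]
    have hrpow : (1 + t) ^ (-(3 / 2) : ℝ) = (s ^ 3)⁻¹ := by
      rw [show (-(3/2) : ℝ) = -(1/2 * 3) from by norm_num,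
        Real.rpow_neg (by linarith : (0:ℝ) ≤ 1 + t),
        Real.rpow_mul (by linarith : (0:ℝ) ≤ 1 + t)]
      congr 1
      rw [show ((3:ℝ)) = ((3:ℕ):ℝ) from by norm_num, Real.rpow_natCast]
      congr 1
      rw [← Real.sqrt_eq_rpow]
    have haval : a = 4 / Real.pi ^ 2 * s ^ 2 := by rw [ha, hs2]
    rw [hsdiv, hrpow, haval]
    have hπne : Real.pi ≠ 0 := ne_of_gt hπ
    have hsne : s ≠ 0 := ne_of_gt hspos
    field_simp
    ring
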